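/- Let K₁, K₂ ⊆ J ⊆ ∘I and w₁, w₂ ∈ ∘W_J. Then w₁∘Δ^{K₁}_{J+} ⊆ w₂∘Δ^{K₂}_{J+} if and only if K₁ ⊇ K₂ and w₁ ∈ w₂∘W_{K₁}; the same equivalence holds with ∘Δ^{K₁}_{J−} and ∘Δ^{K₂}_{J−} in place of ∘Δ^{K₁}_{J+} and ∘Δ^{K₂}_{J+}. -/

import Mathlib

open scoped Pointwise

section

variable {ι V : Type*} [Fintype ι] [Nonempty ι] [AddCommGroup V] [Module ℝ V]

/-- The length of `w` with respect to a generating set `S` of a group. -/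
noncomputable def lenG {G : Type*} [Group G] (S : Set G) (w : G) : ℕ :=
  sInf {n | ∃ l : List G, (∀ x ∈ l, x ∈ S) ∧ l.length = n ∧ l.prod = w}

/-- `v` is a nonnegative linear combination of the simple roots `α`. -/
def FPosComb (α : ι → V) (v : V) : Prop :=
  ∃ c : ι → ℝ, (∀ i, 0 ≤ c i) ∧ v = ∑ i, c i • α i

/-- The parabolic subgroup `∘W_J = ⟨s_j | j ∈ J⟩` of the Weyl group,
realized inside the group of linear automorphisms of `V`. -/
def WoJ (r : ι → V ≃ₗ[ℝ] V) (J : Set ι) : Subgroup (V ≃ₗ[ℝ] V) :=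
  Subgroup.closure (r '' J)

/-- `∘Δ_J = ∘W_J(∘Π_J)` (so `∘Δ_∅ = ∅`). -/
def DeloJ (α : ι → V) (r : ι → V ≃ₗ[ℝ] V) (J : Set ι) : Set V :=
  {v | ∃ g ∈ WoJ r J, ∃ j ∈ J, v = g (α j)}

/-- `∘Δ^K_{J+} = (∘Δ_J ∖ ∘Δ_K) ∩ ∘Δ₊`. -/
def DeloKJpos (α : ι → V) (r : ι → V ≃ₗ[ℝ] V) (J K : Set ι) : Set V :=
  (DeloJ α r J \ DeloJ α r K) ∩ {v | FPosComb α v}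

/-- `∘Δ^K_{J−} = (∘Δ_J ∖ ∘Δ_K) ∩ ∘Δ₋`. -/
def DeloKJneg (α : ι → V) (r : ι → V ≃ₗ[ℝ] V) (J K : Set ι) : Set V :=
  (DeloJ α r J \ DeloJ α r K) ∩ {v | FPosComb α (-v)}

/-- The set `∘W^K_J` of minimal-length representatives of the right cosets `∘W_J/∘W_K`. -/
def MinReps (r : ι → V ≃ₗ[ℝ] V) (J K : Set ι) : Set (V ≃ₗ[ℝ] V) :=
  {w | w ∈ WoJ r J ∧ ∀ v ∈ WoJ r K, lenG (Set.range r) w ≤ lenG (Set.range r) (w * v)}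

/-- `P` is a closed subset relative to the root system `Δo`. -/
def ClosedIn (Δo P : Set V) : Prop :=
  ∀ ε ∈ P, ∀ η ∈ P, ε + η ∈ Δo → ε + η ∈ P

/-- The hypotheses making `(∘Δ, ∘Π, (s_i)_i)` the root system of a finite-dimensional
simple Lie algebra over `ℝ`: `∘Π = {α_i}` is a linearly independent simple system, the `s_i`
are the corresponding simple reflections, `∘Δ = ∘W(∘Π)` is finite, crystallographic and
reduced, every root is a nonnegative or nonpositive combination of `∘Π` (but not both),
and the Dynkin diagram is connected (simplicity). -/
structure SimpleRootSystem (α : ι → V) (r : ι → V ≃ₗ[ℝ] V) : Prop where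
  indep : LinearIndependent ℝ α
  refl_self : ∀ i, r i (α i) = -α i
  refl_line : ∀ i, ∀ v : V, ∃ c : ℝ, r i v = v - c • α i
  invol : ∀ i, r i * r i = 1
  cryst : ∀ i, ∀ v ∈ DeloJ α r Set.univ, ∃ m : ℤ, r i v = v - m • α i
  base : ∀ v ∈ DeloJ α r Set.univ, Xor' (FPosComb α v) (FPosComb α (-v))
  finite : (DeloJ α r Set.univ).Finite
  reduced : ∀ v ∈ DeloJ α r Set.univ, (2 : ℝ) • v ∉ DeloJ α r Set.univ
  irred : ∀ A : Set ι, (∀ i ∈ A, ∀ j ∈ Aᶜ, r i (α j) = α j) → A = ∅ ∨ A = Set.univ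

set_option linter.unusedSectionVars false
open scoped Classical
set_option linter.unusedVariables false
namespace SRS

variable {α : ι → V} {r : ι → V ≃ₗ[ℝ] V}

lemma mul_apply (f g : V ≃ₗ[ℝ] V) (v : V) : (f * g) v = f (g v) := rfl

lemma one_apply (v : V) : (1 : V ≃ₗ[ℝ] V) v = v := rfl

lemma inv_apply_eq {f : V ≃ₗ[ℝ] V} {v u : V} (hv : f v = u) : f⁻¹ u = v := by
  subst hv; exact f.symm_apply_apply v

lemma r_inv (h : SimpleRootSystem α r) (i : ι) : (r i)⁻¹ = r i :=
  inv_eq_of_mul_eq_one_right (h.invol i)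

lemma r_r_apply (h : SimpleRootSystem α r) (i : ι) (v : V) : r i (r i v) = v := by
  have := congrArg (fun g : V ≃ₗ[ℝ] V => g v) (h.invol i)
  simpa [mul_apply, one_apply] using this

lemma r_mem_WoJ {J : Set ι} {j : ι} (hj : j ∈ J) : r j ∈ WoJ r J :=
  Subgroup.subset_closure ⟨j, hj, rfl⟩

lemma prod_reverse_eq_inv (h : SimpleRootSystem α r) (l : List ι) :
    ((l.reverse.map r).prod) = ((l.map r).prod)⁻¹ := by
  induction l with
  | nil => simp
  | cons a l ih =>
    rw [List.reverse_cons, List.map_append, List.prod_append, List.map_cons, List.prod_cons,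
      List.map_nil, List.prod_nil, mul_one, ih, List.map_cons, List.prod_cons, mul_inv_rev,
      r_inv h]

lemma mem_WoJ_iff (h : SimpleRootSystem α r) {J : Set ι} {w : V ≃ₗ[ℝ] V} :
    w ∈ WoJ r J ↔ ∃ l : List ι, (∀ i ∈ l, i ∈ J) ∧ (l.map r).prod = w := by
  constructor
  · intro hw
    induction hw using Subgroup.closure_induction with
    | mem x hx =>
      obtain ⟨j, hj, rfl⟩ := hx
      exact ⟨[j], by simpa using hj, by simp⟩
    | one => exact ⟨[], by simp, by simp⟩
    | mul x y hx hy ihx ihy =>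
      obtain ⟨l1, h1, e1⟩ := ihx; obtain ⟨l2, h2, e2⟩ := ihy
      refine ⟨l1 ++ l2, ?_, by simp [e1, e2]⟩
      intro i hi; rcases List.mem_append.mp hi with hi | hi
      exacts [h1 i hi, h2 i hi]
    | inv x hx ihx =>
      obtain ⟨l, hl, e⟩ := ihx
      exact ⟨l.reverse, fun i hi => hl i (List.mem_reverse.mp hi),
        by rw [prod_reverse_eq_inv h, e]⟩
  · rintro ⟨l, hl, rfl⟩
    exact Subgroup.list_prod_mem _ (by
      intro x hx
      obtain ⟨i, hi, rfl⟩ := List.mem_map.mp hx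
      exact r_mem_WoJ (hl i hi))

lemma WoJ_mono {J J' : Set ι} (hJ : J ⊆ J') : WoJ r J ≤ WoJ r J' :=
  Subgroup.closure_mono (Set.image_mono hJ)

lemma DeloJ_mono (h : SimpleRootSystem α r) {J J' : Set ι} (hJ : J ⊆ J') :
    DeloJ α r J ⊆ DeloJ α r J' := by
  rintro v ⟨g, hg, j, hj, rfl⟩
  exact ⟨g, WoJ_mono hJ hg, j, hJ hj, rfl⟩

lemma alpha_mem_DeloJ {J : Set ι} {j : ι} (hj : j ∈ J) : α j ∈ DeloJ α r J :=
  ⟨1, one_mem _, j, hj, rfl⟩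

lemma smul_DeloJ {J : Set ι} {g : V ≃ₗ[ℝ] V} (hg : g ∈ WoJ r J) {v : V}
    (hv : v ∈ DeloJ α r J) : g v ∈ DeloJ α r J := by
  obtain ⟨g', hg', j, hj, rfl⟩ := hv
  exact ⟨g * g', mul_mem hg hg', j, hj, rfl⟩

lemma neg_mem_DeloJ (h : SimpleRootSystem α r) {J : Set ι} {v : V}
    (hv : v ∈ DeloJ α r J) : -v ∈ DeloJ α r J := by
  obtain ⟨g, hg, j, hj, rfl⟩ := hv
  refine ⟨g * r j, mul_mem hg (r_mem_WoJ hj), j, hj, ?_⟩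
  rw [mul_apply, h.refl_self j, map_neg]

lemma mem_DeloJ_univ (h : SimpleRootSystem α r) {J : Set ι} {v : V}
    (hv : v ∈ DeloJ α r J) : v ∈ DeloJ α r Set.univ :=
  DeloJ_mono h (Set.subset_univ J) hv


/-! ### Positivity cone lemmas -/

lemma Pos_zero : FPosComb α (0 : V) :=
  ⟨0, fun _ => le_refl 0, by simp⟩

lemma Pos_alpha (j : ι) : FPosComb α (α j) := by
  refine ⟨fun i => if i = j then 1 else 0, fun i => by positivity, ?_⟩
  simp [ite_smul]

lemma Pos_add {u v : V} (hu : FPosComb α u) (hv : FPosComb α v) : FPosComb α (u + v) := by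
  obtain ⟨c, hc, rfl⟩ := hu; obtain ⟨d, hd, rfl⟩ := hv
  exact ⟨c + d, fun i => add_nonneg (hc i) (hd i), by simp [add_smul, Finset.sum_add_distrib]⟩

lemma Pos_smul {t : ℝ} (ht : 0 ≤ t) {v : V} (hv : FPosComb α v) : FPosComb α (t • v) := by
  obtain ⟨c, hc, rfl⟩ := hv
  exact ⟨fun i => t * c i, fun i => mul_nonneg ht (hc i),
    by simp [Finset.smul_sum, mul_smul]⟩

lemma Pos_finsum {c : ι → ℝ} {f : ι → V} (hc : ∀ i, 0 ≤ c i)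
    (hf : ∀ i, c i ≠ 0 → FPosComb α (f i)) : FPosComb α (∑ i, c i • f i) := by
  refine Finset.sum_induction _ _ (fun a b ha hb => Pos_add ha hb) Pos_zero ?_
  intro i _
  by_cases hi : c i = 0
  · rw [hi, zero_smul]; exact Pos_zero
  · exact Pos_smul (hc i) (hf i hi)

/-! ### Coefficients and span -/

lemma coeff_unique (h : SimpleRootSystem α r) {c d : ι → ℝ}
    (e : ∑ i, c i • α i = ∑ i, d i • α i) : c = d := by
  funext i
  have h0 : ∑ i, (c i - d i) • α i = 0 := by
    simp [sub_smul, Finset.sum_sub_distrib, e]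
  have := Fintype.linearIndependent_iff.mp h.indep (fun i => c i - d i) h0 i
  linarith [this]

lemma mem_span_iff {J : Set ι} {v : V} :
    v ∈ Submodule.span ℝ (α '' J) ↔
      ∃ c : ι → ℝ, (∀ i, i ∉ J → c i = 0) ∧ v = ∑ i, c i • α i := by
  constructor
  · intro hv
    induction hv using Submodule.span_induction with
    | mem x hx =>
      obtain ⟨j, hj, rfl⟩ := hx
      refine ⟨fun i => if i = j then 1 else 0, fun i hi => by
        simp only [ite_eq_right_iff]; rintro rfl; exact absurd hj hi, by simp [ite_smul]⟩
    | zero => exact ⟨0, fun _ _ => rfl, by simp⟩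
    | add x y hx hy ihx ihy =>
      obtain ⟨c, hc, rfl⟩ := ihx; obtain ⟨d, hd, rfl⟩ := ihy
      exact ⟨c + d, fun i hi => by simp [hc i hi, hd i hi],
        by simp [add_smul, Finset.sum_add_distrib]⟩
    | smul t x hx ihx =>
      obtain ⟨c, hc, rfl⟩ := ihx
      exact ⟨fun i => t * c i, fun i hi => by simp [hc i hi],
        by simp [Finset.smul_sum, mul_smul]⟩
  · rintro ⟨c, hc, rfl⟩
    refine Submodule.sum_mem _ (fun i _ => ?_)
    by_cases hi : i ∈ J
    · exact Submodule.smul_mem _ _ (Submodule.subset_span ⟨i, hi, rfl⟩)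
    · rw [hc i hi, zero_smul]; exact Submodule.zero_mem _

lemma r_preserves_span (h : SimpleRootSystem α r) {J : Set ι} {a : ι} (ha : a ∈ J)
    {u : V} (hu : u ∈ Submodule.span ℝ (α '' J)) : r a u ∈ Submodule.span ℝ (α '' J) := by
  obtain ⟨c, hc⟩ := h.refl_line a u
  rw [hc]
  exact Submodule.sub_mem _ hu
    (Submodule.smul_mem _ _ (Submodule.subset_span ⟨a, ha, rfl⟩))

lemma word_preserves_span (h : SimpleRootSystem α r) {J : Set ι} (l : List ι)
    (hl : ∀ i ∈ l, i ∈ J) {u : V} (hu : u ∈ Submodule.span ℝ (α '' J)) :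
    (l.map r).prod u ∈ Submodule.span ℝ (α '' J) := by
  induction l with
  | nil => simpa [one_apply] using hu
  | cons a t iht =>
    have : ((a :: t).map r).prod u = r a (((t.map r).prod) u) := by
      rw [List.map_cons, List.prod_cons, mul_apply]
    rw [this]
    exact r_preserves_span h (hl a (List.mem_cons_self))
      (iht fun i hi => hl i (List.mem_cons_of_mem a hi))

lemma DeloJ_subset_span (h : SimpleRootSystem α r) {J : Set ι} :
    DeloJ α r J ⊆ Submodule.span ℝ (α '' J) := by
  rintro v ⟨g, hg, j, hj, rfl⟩
  obtain ⟨l, hl, rfl⟩ := (mem_WoJ_iff h).mp hg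
  exact word_preserves_span h l hl (Submodule.subset_span ⟨j, hj, rfl⟩)

lemma j_mem_of_alpha_mem_span (h : SimpleRootSystem α r) {K : Set ι} {j : ι}
    (hj : α j ∈ Submodule.span ℝ (α '' K)) : j ∈ K := by
  obtain ⟨c, hc, e⟩ := mem_span_iff.mp hj
  have e2 : ∑ i, (fun i => if i = j then (1:ℝ) else 0) i • α i = ∑ i, c i • α i := by
    rw [← e]; simp [ite_smul]
  have := congrFun (coeff_unique h e2) j
  simp only [if_pos rfl] at this
  by_contra hjK
  rw [hc j hjK] at this
  norm_num at this

lemma j_mem_of_alpha_mem_DeloJ (h : SimpleRootSystem α r) {K : Set ι} {j : ι}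
    (hj : α j ∈ DeloJ α r K) : j ∈ K :=
  j_mem_of_alpha_mem_span h (DeloJ_subset_span h hj)

lemma root_support (h : SimpleRootSystem α r) {J : Set ι} {v : V}
    (hv : v ∈ DeloJ α r J) (hp : FPosComb α v) :
    ∃ c : ι → ℝ, (∀ i, 0 ≤ c i) ∧ (∀ i, i ∉ J → c i = 0) ∧ v = ∑ i, c i • α i := by
  obtain ⟨c, hc, e⟩ := hp
  obtain ⟨d, hd, e'⟩ := mem_span_iff.mp (DeloJ_subset_span h hv)
  have : c = d := coeff_unique h (e ▸ e' ▸ rfl)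
  exact ⟨c, hc, fun i hi => this ▸ hd i hi, e⟩

/-! ### Roots are nonzero; sign dichotomy -/

lemma root_ne_zero (h : SimpleRootSystem α r) {v : V}
    (hv : v ∈ DeloJ α r Set.univ) : v ≠ 0 := by
  rintro rfl
  have := h.base 0 hv
  rw [neg_zero] at this
  simp [Xor'] at this


lemma Pos_or_neg (h : SimpleRootSystem α r) {v : V} (hv : v ∈ DeloJ α r Set.univ) :
    FPosComb α v ∨ FPosComb α (-v) := by
  rcases h.base v hv with ⟨h1, _⟩ | ⟨h1, _⟩
  exacts [Or.inl h1, Or.inr h1]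

lemma not_Pos_both (h : SimpleRootSystem α r) {v : V} (hv : v ∈ DeloJ α r Set.univ)
    (h1 : FPosComb α v) (h2 : FPosComb α (-v)) : False := by
  rcases h.base v hv with ⟨_, hn⟩ | ⟨_, hn⟩
  exacts [hn h2, hn h1]

lemma neg_Pos_of_not_Pos (h : SimpleRootSystem α r) {v : V}
    (hv : v ∈ DeloJ α r Set.univ) (hn : ¬ FPosComb α v) : FPosComb α (-v) :=
  (Pos_or_neg h hv).resolve_left hn

/-! ### The root lattice -/

def IsZC (α : ι → V) (v : V) : Prop := ∃ n : ι → ℤ, v = ∑ i, (n i : ℝ) • α i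

lemma zsmul_cast (m : ℤ) (v : V) : (m : ℤ) • v = ((m : ℝ)) • v :=
  (Int.cast_smul_eq_zsmul ℝ m v).symm

lemma r_IsZC (h : SimpleRootSystem α r) (i : ι) {v : V} (hv : IsZC α v) :
    IsZC α (r i v) := by
  obtain ⟨n, rfl⟩ := hv
  have hex : ∀ j, ∃ m : ℤ, r i (α j) = α j - (m : ℤ) • α i := fun j =>
    h.cryst i (α j) (alpha_mem_DeloJ (Set.mem_univ j))
  choose m hm using hex
  refine ⟨fun k => n k - (if k = i then ∑ j, n j * m j else 0), ?_⟩
  have e1 : r i (∑ j, ((n j : ℝ)) • α j)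
      = (∑ j, (n j : ℝ) • α j) - (∑ j, ((n j * m j : ℤ) : ℝ)) • α i := by
    rw [map_sum]
    have : ∀ j, r i ((n j : ℝ) • α j) = (n j : ℝ) • α j - ((n j * m j : ℤ) : ℝ) • α i := by
      intro j
      rw [map_smul, hm j, zsmul_cast, smul_sub, smul_smul]
      push_cast
      ring_nf
    rw [Finset.sum_congr rfl (fun j _ => this j), Finset.sum_sub_distrib, Finset.sum_smul]
  rw [e1]
  have e2 : ∀ k, ((n k - (if k = i then ∑ j, n j * m j else 0) : ℤ) : ℝ) • α k
      = (n k : ℝ) • α k - (if k = i then ((∑ j, n j * m j : ℤ) : ℝ) • α i else 0) := by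
    intro k
    by_cases hk : k = i
    · subst hk; simp [sub_smul]
    · simp [hk]
  rw [Finset.sum_congr rfl (fun k _ => e2 k), Finset.sum_sub_distrib]
  congr 1
  rw [Finset.sum_ite_eq' Finset.univ i (fun _ => ((∑ j, n j * m j : ℤ) : ℝ) • α i)]
  simp

lemma word_IsZC (h : SimpleRootSystem α r) (l : List ι) {u : V} (hu : IsZC α u) :
    IsZC α ((l.map r).prod u) := by
  induction l with
  | nil => simpa [one_apply] using hu
  | cons a t iht =>
    have : ((a :: t).map r).prod u = r a (((t.map r).prod) u) := by
      rw [List.map_cons, List.prod_cons, mul_apply]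
    rw [this]
    exact r_IsZC h a iht

lemma alpha_IsZC (j : ι) : IsZC α (α j) :=
  ⟨fun k => if k = j then 1 else 0, by simp [ite_smul]⟩

lemma root_IsZC (h : SimpleRootSystem α r) {v : V} (hv : v ∈ DeloJ α r Set.univ) :
    IsZC α v := by
  obtain ⟨g, hg, j, _, rfl⟩ := hv
  obtain ⟨l, _, rfl⟩ := (mem_WoJ_iff h).mp hg
  exact word_IsZC h l (alpha_IsZC j)

lemma root_smul_eq_one (h : SimpleRootSystem α r) {k : ι} {c : ℝ} (hc : 0 < c)
    (hv : c • α k ∈ DeloJ α r Set.univ) : c = 1 := by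
  obtain ⟨n, hn⟩ := root_IsZC h hv
  have hck : c = (n k : ℝ) := by
    have e2 : ∑ i, (fun i => if i = k then c else 0) i • α i = ∑ i, ((n i : ℝ)) • α i := by
      rw [← hn]; simp [ite_smul]
    have := congrFun (coeff_unique h e2) k
    simpa using this
  obtain ⟨g, hg, j, _, hgj⟩ := hv
  have hginv : g⁻¹ (c • α k) = α j := by
    rw [hgj]; exact (g.symm_apply_apply _)
  have hmem : g⁻¹ (α k) ∈ DeloJ α r Set.univ :=
    smul_DeloJ (inv_mem hg) (alpha_mem_DeloJ (Set.mem_univ k))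
  obtain ⟨m, hm⟩ := root_IsZC h hmem
  have : α j = ∑ i, (c * (m i : ℝ)) • α i := by
    rw [← hginv, map_smul, hm, Finset.smul_sum]
    exact Finset.sum_congr rfl (fun i _ => by rw [smul_smul])
  have e3 : ∑ i, (fun i => if i = j then (1:ℝ) else 0) i • α i
      = ∑ i, (fun i => c * (m i : ℝ)) i • α i := by
    rw [← this]; simp [ite_smul]
  have hj := congrFun (coeff_unique h e3) j
  norm_num at hj
  rw [hck] at hj
  have : ((n k * m j : ℤ) : ℝ) = 1 := by push_cast; linarith [hj]
  have hint : n k * m j = 1 := by exact_mod_cast this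
  rcases Int.isUnit_iff.mp (IsUnit.of_mul_eq_one _ hint) with h1 | h1
  · rw [hck, h1]; norm_num
  · exfalso; rw [hck, h1] at hc; norm_num at hc

/-! ### Simple reflections permute the other positive roots -/

lemma refl_pos (h : SimpleRootSystem α r) {j : ι} {v : V}
    (hv : v ∈ DeloJ α r Set.univ) (hp : FPosComb α v) (hne : v ≠ α j) :
    FPosComb α (r j v) := by
  by_contra hneg
  have hrv : r j v ∈ DeloJ α r Set.univ :=
    smul_DeloJ (r_mem_WoJ (Set.mem_univ j)) hv
  have hnegP : FPosComb α (-(r j v)) := neg_Pos_of_not_Pos h hrv hneg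
  obtain ⟨m, hm⟩ := h.cryst j v hv
  obtain ⟨c, hc, hcv⟩ := hp
  obtain ⟨d, hd, hdv⟩ := hnegP
  have hsum : v + -(r j v) = ((m : ℝ)) • α j := by
    have : -(r j v) = -(v - ((m:ℝ)) • α j) := by rw [hm, zsmul_cast]
    rw [this]; abel
  have key : ∑ i, (c i + d i) • α i = ∑ i, (fun i => if i = j then (m:ℝ) else 0) i • α i := by
    have e : ∑ i, (c i + d i) • α i = (∑ i, c i • α i) + (∑ i, d i • α i) := by
      simp [add_smul, Finset.sum_add_distrib]
    rw [e, ← hcv, ← hdv, hsum]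
    simp [ite_smul]
  have hcd := coeff_unique h key
  have hzero : ∀ i, i ≠ j → c i = 0 := by
    intro i hij
    have := congrFun hcd i
    simp only [if_neg hij] at this
    linarith [hc i, hd i]
  have hvj : v = c j • α j := by
    rw [hcv]
    rw [Finset.sum_eq_single j (fun i _ hij => by rw [hzero i hij, zero_smul]) (by simp)]
  have hcjpos : 0 < c j := by
    rcases lt_or_eq_of_le (hc j) with h1 | h1
    · exact h1
    · exfalso
      apply root_ne_zero h hv
      rw [hvj, ← h1, zero_smul]
  have := root_smul_eq_one h hcjpos (hvj ▸ hv)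
  rw [this, one_smul] at hvj
  exact hne hvj


/-! ### Inversion sets -/

def NSet (α : ι → V) (r : ι → V ≃ₗ[ℝ] V) (J : Set ι) (w : V ≃ₗ[ℝ] V) : Set V :=
  {v | v ∈ DeloJ α r J ∧ FPosComb α v ∧ ¬ FPosComb α (w v)}

lemma NSet_finite (h : SimpleRootSystem α r) (J : Set ι) (w : V ≃ₗ[ℝ] V) :
    (NSet α r J w).Finite :=
  h.finite.subset (by rintro v ⟨hv, _, _⟩; exact mem_DeloJ_univ h hv)

lemma NSet_one (h : SimpleRootSystem α r) (J : Set ι) : NSet α r J 1 = ∅ := by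
  ext v
  simp only [NSet, Set.mem_setOf_eq, Set.mem_empty_iff_false, iff_false, not_and, one_apply]
  exact fun _ hp hn => hn hp

lemma ne_neg_alpha_of_Pos (h : SimpleRootSystem α r) {v : V} (hp : FPosComb α v)
    (j : ι) : v ≠ -α j := by
  rintro rfl
  exact not_Pos_both h (alpha_mem_DeloJ (Set.mem_univ j)) (Pos_alpha j) (by simpa using hp)

lemma mul_r_r (h : SimpleRootSystem α r) (w : V ≃ₗ[ℝ] V) (j : ι) :
    (w * r j) * r j = w := by
  rw [mul_assoc, h.invol j, mul_one]

lemma NSet_image_subset (h : SimpleRootSystem α r) {J : Set ι} {j : ι} (hj : j ∈ J)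
    (w : V ≃ₗ[ℝ] V) :
    (r j) '' (NSet α r J w \ {α j}) ⊆ NSet α r J (w * r j) \ {α j} := by
  rintro v ⟨u, ⟨⟨huD, huP, huN⟩, hune⟩, rfl⟩
  have hune' : u ≠ α j := hune
  have huU : u ∈ DeloJ α r Set.univ := mem_DeloJ_univ h huD
  refine ⟨⟨smul_DeloJ (r_mem_WoJ hj) huD, refl_pos h huU huP hune', ?_⟩, ?_⟩
  · rw [mul_apply, r_r_apply h]
    exact huN
  · intro hc
    have : u = -α j := by
      have : r j (r j u) = r j (α j) := by rw [congrArg (r j) (hc : r j u = α j)]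
      rw [r_r_apply h, h.refl_self] at this
      exact this
    exact ne_neg_alpha_of_Pos h huP j this

lemma NSet_mul_diff (h : SimpleRootSystem α r) {J : Set ι} {j : ι} (hj : j ∈ J)
    (w : V ≃ₗ[ℝ] V) :
    NSet α r J (w * r j) \ {α j} = (r j) '' (NSet α r J w \ {α j}) := by
  refine Set.Subset.antisymm ?_ (NSet_image_subset h hj w)
  have h2 := NSet_image_subset h hj (w * r j)
  rw [mul_r_r h] at h2
  intro v hv
  have h4 : r j v ∈ NSet α r J w \ {α j} := h2 ⟨v, hv, rfl⟩
  exact ⟨r j v, h4, r_r_apply h j v⟩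

lemma alpha_mem_NSet_mul_iff (h : SimpleRootSystem α r) {J : Set ι} {j : ι} (hj : j ∈ J)
    {w : V ≃ₗ[ℝ] V} (hw : w ∈ WoJ r Set.univ) :
    α j ∈ NSet α r J (w * r j) ↔ FPosComb α (w (α j)) := by
  have hroot : w (α j) ∈ DeloJ α r Set.univ :=
    smul_DeloJ hw (alpha_mem_DeloJ (Set.mem_univ j))
  have happ : (w * r j) (α j) = -(w (α j)) := by
    rw [mul_apply, h.refl_self, map_neg]
  constructor
  · rintro ⟨_, _, hn⟩
    rw [happ] at hn
    exact (Pos_or_neg h hroot).resolve_right hn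
  · intro hp
    refine ⟨alpha_mem_DeloJ hj, Pos_alpha j, ?_⟩
    rw [happ]
    intro hc
    exact not_Pos_both h hroot hp hc

lemma alpha_mem_NSet_iff (h : SimpleRootSystem α r) {J : Set ι} {j : ι} (hj : j ∈ J)
    {w : V ≃ₗ[ℝ] V} :
    α j ∈ NSet α r J w ↔ ¬ FPosComb α (w (α j)) := by
  constructor
  · rintro ⟨_, _, hn⟩; exact hn
  · intro hn; exact ⟨alpha_mem_DeloJ hj, Pos_alpha j, hn⟩

lemma NSet_ncard_succ (h : SimpleRootSystem α r) {J : Set ι} {j : ι} (hj : j ∈ J)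
    {w : V ≃ₗ[ℝ] V} (hw : w ∈ WoJ r Set.univ) (hp : FPosComb α (w (α j))) :
    (NSet α r J (w * r j)).ncard = (NSet α r J w).ncard + 1 := by
  have hfin := NSet_finite h J (w * r j)
  have hfin' := NSet_finite h J w
  have hmem : α j ∈ NSet α r J (w * r j) := (alpha_mem_NSet_mul_iff h hj hw).mpr hp
  have hnotmem : α j ∉ NSet α r J w := by
    rw [alpha_mem_NSet_iff h hj]; exact fun hc => hc hp
  have e1 : (NSet α r J (w * r j) \ {α j}).ncard + 1 = (NSet α r J (w * r j)).ncard :=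
    Set.ncard_diff_singleton_add_one hmem hfin
  have e2 : (NSet α r J (w * r j) \ {α j}).ncard = (NSet α r J w).ncard := by
    rw [NSet_mul_diff h hj w, Set.ncard_image_of_injective _ (r j).injective,
      Set.diff_singleton_eq_self hnotmem]
  omega

lemma NSet_ncard_pred (h : SimpleRootSystem α r) {J : Set ι} {j : ι} (hj : j ∈ J)
    {w : V ≃ₗ[ℝ] V} (hw : w ∈ WoJ r Set.univ) (hp : ¬ FPosComb α (w (α j))) :
    (NSet α r J w).ncard = (NSet α r J (w * r j)).ncard + 1 := by
  have hw' : w * r j ∈ WoJ r Set.univ := mul_mem hw (r_mem_WoJ (Set.mem_univ j))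
  have hroot : w (α j) ∈ DeloJ α r Set.univ :=
    smul_DeloJ hw (alpha_mem_DeloJ (Set.mem_univ j))
  have hp' : FPosComb α ((w * r j) (α j)) := by
    rw [mul_apply, h.refl_self, map_neg]
    exact neg_Pos_of_not_Pos h hroot hp
  have := NSet_ncard_succ h hj hw' hp'
  rwa [mul_r_r h] at this

lemma NSet_word_bound (h : SimpleRootSystem α r) {J : Set ι} (l : List ι)
    (hl : ∀ i ∈ l, i ∈ J) :
    (NSet α r J ((l.map r).prod)).ncard ≤ l.length ∧
      (NSet α r J ((l.map r).prod)).ncard % 2 = l.length % 2 := by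
  induction l using List.reverseRecOn with
  | nil => simp [NSet_one h]
  | append_singleton l a ih =>
    have hl' : ∀ i ∈ l, i ∈ J := fun i hi => hl i (List.mem_append_left _ hi)
    have ha : a ∈ J := hl a (List.mem_append_right _ (List.mem_singleton_self a))
    obtain ⟨ih1, ih2⟩ := ih hl'
    have hprod : ((l ++ [a]).map r).prod = (l.map r).prod * r a := by
      rw [List.map_append, List.prod_append]; simp
    have hwmem : (l.map r).prod ∈ WoJ r Set.univ :=
      (mem_WoJ_iff h).mpr ⟨l, fun i _ => Set.mem_univ i, rfl⟩
    rw [hprod, List.length_append, List.length_singleton]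
    by_cases hp : FPosComb α ((l.map r).prod (α a))
    · have := NSet_ncard_succ h ha hwmem hp
      omega
    · have := NSet_ncard_pred h ha hwmem hp
      omega

/-! ### Length -/

noncomputable def lenJ (r : ι → V ≃ₗ[ℝ] V) (J : Set ι) (w : V ≃ₗ[ℝ] V) : ℕ :=
  sInf {n | ∃ l : List ι, (∀ i ∈ l, i ∈ J) ∧ l.length = n ∧ (l.map r).prod = w}

lemma lenJ_exists (h : SimpleRootSystem α r) {J : Set ι} {w : V ≃ₗ[ℝ] V}
    (hw : w ∈ WoJ r J) :
    ∃ l : List ι, (∀ i ∈ l, i ∈ J) ∧ l.length = lenJ r J w ∧ (l.map r).prod = w := by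
  have hne : {n | ∃ l : List ι, (∀ i ∈ l, i ∈ J) ∧ l.length = n ∧ (l.map r).prod = w}.Nonempty := by
    obtain ⟨l, hl, e⟩ := (mem_WoJ_iff h).mp hw
    exact ⟨l.length, l, hl, rfl, e⟩
  exact Nat.sInf_mem hne

lemma lenJ_le (r : ι → V ≃ₗ[ℝ] V) {J : Set ι} (l : List ι) (hl : ∀ i ∈ l, i ∈ J) :
    lenJ r J ((l.map r).prod) ≤ l.length :=
  Nat.sInf_le ⟨l, hl, rfl, rfl⟩

lemma eq_one_of_lenJ_zero (h : SimpleRootSystem α r) {J : Set ι} {w : V ≃ₗ[ℝ] V}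
    (hw : w ∈ WoJ r J) (h0 : lenJ r J w = 0) : w = 1 := by
  obtain ⟨l, _, hlen, e⟩ := lenJ_exists h hw
  rw [h0, List.length_eq_zero_iff] at hlen
  subst hlen
  simpa using e.symm

lemma lenJ_mul_r_le (h : SimpleRootSystem α r) {J : Set ι} {j : ι} (hj : j ∈ J)
    {w : V ≃ₗ[ℝ] V} (hw : w ∈ WoJ r J) :
    lenJ r J (w * r j) ≤ lenJ r J w + 1 := by
  obtain ⟨l, hl, hlen, e⟩ := lenJ_exists h hw
  have : ((l ++ [j]).map r).prod = w * r j := by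
    rw [List.map_append, List.prod_append]
    simp [e]
  have hle := lenJ_le r (l ++ [j]) (by
    intro i hi
    rcases List.mem_append.mp hi with hi | hi
    · exact hl i hi
    · rw [List.mem_singleton.mp hi]; exact hj)
  rw [this] at hle
  simpa [hlen] using hle

lemma NSet_ncard_le_lenJ (h : SimpleRootSystem α r) {J : Set ι} {w : V ≃ₗ[ℝ] V}
    (hw : w ∈ WoJ r J) :
    (NSet α r J w).ncard ≤ lenJ r J w ∧ (NSet α r J w).ncard % 2 = lenJ r J w % 2 := by
  obtain ⟨l, hl, hlen, e⟩ := lenJ_exists h hw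
  have := NSet_word_bound h l hl
  rw [e, hlen] at this
  exact this

lemma lenJ_mul_r_dichotomy (h : SimpleRootSystem α r) {J : Set ι} {j : ι} (hj : j ∈ J)
    {w : V ≃ₗ[ℝ] V} (hw : w ∈ WoJ r J) :
    lenJ r J (w * r j) = lenJ r J w + 1 ∨ lenJ r J w = lenJ r J (w * r j) + 1 := by
  have hw' : w * r j ∈ WoJ r J := mul_mem hw (r_mem_WoJ hj)
  have hle1 := lenJ_mul_r_le h hj hw
  have hle2 := lenJ_mul_r_le h hj hw'
  rw [mul_r_r h] at hle2
  have hwu : w ∈ WoJ r Set.univ := WoJ_mono (Set.subset_univ J) hw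
  obtain ⟨b1, p1⟩ := NSet_ncard_le_lenJ h hw
  obtain ⟨b2, p2⟩ := NSet_ncard_le_lenJ h hw'
  by_cases hp : FPosComb α (w (α j))
  · have := NSet_ncard_succ h hj hwu hp
    omega
  · have := NSet_ncard_pred h hj hwu hp
    omega


/-! ### Descents -/

lemma pos_image_of_simple_pos (h : SimpleRootSystem α r) {J : Set ι} {w : V ≃ₗ[ℝ] V}
    (hyp : ∀ j ∈ J, FPosComb α (w (α j))) {v : V} (hv : v ∈ DeloJ α r J)
    (hp : FPosComb α v) : FPosComb α (w v) := by
  obtain ⟨c, hc, hsupp, rfl⟩ := root_support h hv hp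
  have : w (∑ i, c i • α i) = ∑ i, c i • w (α i) := by
    rw [map_sum]; exact Finset.sum_congr rfl (fun i _ => map_smul w _ _)
  rw [this]
  refine Pos_finsum hc (fun i hi => ?_)
  by_cases hiJ : i ∈ J
  · exact hyp i hiJ
  · exact absurd (hsupp i hiJ) hi

lemma descent_exists (h : SimpleRootSystem α r) {J : Set ι} {w : V ≃ₗ[ℝ] V} {v : V}
    (hv : v ∈ DeloJ α r J) (hp : FPosComb α v) (hn : ¬ FPosComb α (w v)) :
    ∃ j ∈ J, ¬ FPosComb α (w (α j)) := by
  by_contra hc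
  push_neg at hc
  exact hn (pos_image_of_simple_pos h hc hv hp)

lemma pos_preimage (h : SimpleRootSystem α r) {J : Set ι} {w : V ≃ₗ[ℝ] V}
    (hw : w ∈ WoJ r J)
    (hall : ∀ v ∈ DeloJ α r J, FPosComb α v → FPosComb α (w v))
    {u : V} (hu : u ∈ DeloJ α r J) (hup : FPosComb α u) :
    w⁻¹ u ∈ DeloJ α r J ∧ FPosComb α (w⁻¹ u) := by
  classical
  set P : Set V := {v | v ∈ DeloJ α r J ∧ FPosComb α v} with hP
  have hPfin : P.Finite := h.finite.subset (by rintro v ⟨hv, _⟩; exact mem_DeloJ_univ h hv)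
  have himg : (⇑w) '' P ⊆ P := by
    rintro x ⟨v, ⟨hv1, hv2⟩, rfl⟩
    exact ⟨smul_DeloJ hw hv1, hall v hv1 hv2⟩
  have heq : (⇑w) '' P = P :=
    Set.eq_of_subset_of_ncard_le himg
      (by rw [Set.ncard_image_of_injective _ w.injective]) hPfin
  have : u ∈ (⇑w) '' P := heq.symm ▸ (⟨hu, hup⟩ : u ∈ P)
  obtain ⟨v, hvP, hvu⟩ := this
  have : w⁻¹ u = v := inv_apply_eq hvu
  rw [this]
  exact hvP

lemma perm_simple (h : SimpleRootSystem α r) {J : Set ι} {w : V ≃ₗ[ℝ] V}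
    (hw : w ∈ WoJ r J)
    (hall : ∀ v ∈ DeloJ α r J, FPosComb α v → FPosComb α (w v))
    {j : ι} (hj : j ∈ J) : ∃ k ∈ J, w (α j) = α k := by
  classical
  have hwaj : w (α j) ∈ DeloJ α r J := smul_DeloJ hw (alpha_mem_DeloJ hj)
  have hwajp : FPosComb α (w (α j)) := hall _ (alpha_mem_DeloJ hj) (Pos_alpha j)
  obtain ⟨c, hc, hcsupp, hcw⟩ := root_support h hwaj hwajp
  have hd : ∀ k, ∃ d : ι → ℝ, (∀ m, 0 ≤ d m) ∧ (∀ m, m ∉ J → d m = 0) ∧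
      (c k ≠ 0 → w⁻¹ (α k) = ∑ m, d m • α m) := by
    intro k
    by_cases hck : c k = 0
    · exact ⟨0, fun _ => le_refl 0, fun _ _ => rfl, fun hcon => absurd hck hcon⟩
    · have hkJ : k ∈ J := by by_contra hkJ; exact hck (hcsupp k hkJ)
      obtain ⟨h1, h2⟩ := pos_preimage h hw hall (alpha_mem_DeloJ hkJ) (Pos_alpha k)
      obtain ⟨d, hd1, hd2, hd3⟩ := root_support h h1 h2
      exact ⟨d, hd1, hd2, fun _ => hd3⟩
  choose d hd1 hd2 hd3 using hd
  have expand : α j = ∑ m, (∑ k, c k * d k m) • α m := by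
    have e0 : α j = w⁻¹ (w (α j)) := (w.symm_apply_apply _).symm
    have e1 : w⁻¹ (w (α j)) = ∑ k, c k • w⁻¹ (α k) := by
      rw [hcw, map_sum]
      exact Finset.sum_congr rfl (fun k _ => map_smul _ _ _)
    have e2 : ∑ k, c k • w⁻¹ (α k) = ∑ k, ∑ m, (c k * d k m) • α m := by
      refine Finset.sum_congr rfl (fun k _ => ?_)
      by_cases hck : c k = 0
      · simp [hck]
      · rw [hd3 k hck, Finset.smul_sum]
        exact Finset.sum_congr rfl (fun m _ => by rw [smul_smul])
    rw [e0, e1, e2, Finset.sum_comm]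
    exact Finset.sum_congr rfl (fun m _ => by rw [Finset.sum_smul])
  have huniq : ∀ m, (if m = j then (1:ℝ) else 0) = ∑ k, c k * d k m := by
    have e3 : ∑ m, (fun m => if m = j then (1:ℝ) else 0) m • α m
        = ∑ m, (fun m => ∑ k, c k * d k m) m • α m := by
      rw [← expand]; simp [ite_smul]
    exact fun m => congrFun (coeff_unique h e3) m
  have hj1 : ∑ k, c k * d k j = 1 := by
    have := huniq j; simpa using this.symm
  obtain ⟨k₀, _, hk₀⟩ := Finset.exists_ne_zero_of_sum_ne_zero (by rw [hj1]; norm_num :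
    ∑ k, c k * d k j ≠ 0)
  have hck₀ : c k₀ ≠ 0 := fun hc0 => hk₀ (by rw [hc0, zero_mul])
  have hk₀J : k₀ ∈ J := by by_contra hkJ; exact hck₀ (hcsupp k₀ hkJ)
  have hdm : ∀ m, m ≠ j → d k₀ m = 0 := by
    intro m hm
    have hzero : ∑ k, c k * d k m = 0 := by
      have := huniq m; simpa [hm] using this.symm
    have := (Finset.sum_eq_zero_iff_of_nonneg (fun k _ =>
      mul_nonneg (hc k) (hd1 k m))).mp hzero k₀ (Finset.mem_univ k₀)
    rcases mul_eq_zero.mp this with h0 | h0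
    · exact absurd h0 hck₀
    · exact h0
  have hwk₀ : w⁻¹ (α k₀) = d k₀ j • α j := by
    rw [hd3 k₀ hck₀]
    rw [Finset.sum_eq_single j (fun m _ hm => by rw [hdm m hm, zero_smul]) (by simp)]
  have hdpos : 0 < d k₀ j := by
    rcases lt_or_eq_of_le (hd1 k₀ j) with h1 | h1
    · exact h1
    · exfalso; apply hk₀; rw [← h1, mul_zero]
  have hroot : d k₀ j • α j ∈ DeloJ α r Set.univ := by
    rw [← hwk₀]
    exact mem_DeloJ_univ h
      (smul_DeloJ (inv_mem hw) (alpha_mem_DeloJ hk₀J))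
  have := root_smul_eq_one h hdpos hroot
  rw [this, one_smul] at hwk₀
  refine ⟨k₀, hk₀J, ?_⟩
  rw [← hwk₀]
  exact (w.apply_symm_apply _)


/-! ### The reflection coefficient functionals -/

noncomputable def cf (h : SimpleRootSystem α r) (i : ι) (v : V) : ℝ :=
  (h.refl_line i v).choose

lemma cf_spec (h : SimpleRootSystem α r) (i : ι) (v : V) :
    r i v = v - cf h i v • α i :=
  (h.refl_line i v).choose_spec

lemma alpha_ne_zero (h : SimpleRootSystem α r) (i : ι) : α i ≠ 0 :=
  h.indep.ne_zero i

lemma cf_unique (h : SimpleRootSystem α r) {i : ι} {v : V} {c : ℝ}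
    (hc : r i v = v - c • α i) : c = cf h i v := by
  have hs := cf_spec h i v
  rw [hc] at hs
  exact smul_left_injective ℝ (alpha_ne_zero h i) (sub_right_inj.mp hs)

lemma cf_add (h : SimpleRootSystem α r) (i : ι) (u v : V) :
    cf h i (u + v) = cf h i u + cf h i v := by
  symm
  apply cf_unique h
  rw [map_add, cf_spec h i u, cf_spec h i v, add_smul]
  abel

lemma cf_smul (h : SimpleRootSystem α r) (i : ι) (t : ℝ) (v : V) :
    cf h i (t • v) = t * cf h i v := by
  symm
  apply cf_unique h
  rw [map_smul, cf_spec h i v, smul_sub, smul_smul]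

lemma cf_neg (h : SimpleRootSystem α r) (i : ι) (v : V) :
    cf h i (-v) = - cf h i v := by
  have := cf_smul h i (-1) v
  simpa using this

lemma cf_sub (h : SimpleRootSystem α r) (i : ι) (u v : V) :
    cf h i (u - v) = cf h i u - cf h i v := by
  rw [sub_eq_add_neg, cf_add h, cf_neg h, sub_eq_add_neg]

lemma cf_alpha_self (h : SimpleRootSystem α r) (i : ι) : cf h i (α i) = 2 := by
  apply (cf_unique h ?_).symm
  rw [h.refl_self i, two_smul]
  abel

/-! ### Rank two: pair coordinates -/

lemma pair_sum (h : SimpleRootSystem α r) {s t : ι} (hst : s ≠ t) (x y : ℝ) :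
    ∑ i, (if i = s then x else if i = t then y else 0) • α i = x • α s + y • α t := by
  classical
  rw [← Finset.sum_subset (Finset.subset_univ ({s, t} : Finset ι))]
  · rw [Finset.sum_pair hst]
    simp [hst, (Ne.symm hst)]
  · intro i _ hi
    simp only [Finset.mem_insert, Finset.mem_singleton] at hi
    push_neg at hi
    simp [hi.1, hi.2]

lemma pair_coeff_unique (h : SimpleRootSystem α r) {s t : ι} (hst : s ≠ t)
    {x y x' y' : ℝ} (e : x • α s + y • α t = x' • α s + y' • α t) :
    x = x' ∧ y = y' := by
  classical
  have e2 : ∑ i, (fun i => if i = s then x else if i = t then y else 0) i • α i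
      = ∑ i, (fun i => if i = s then x' else if i = t then y' else 0) i • α i := by
    rw [pair_sum h hst, pair_sum h hst]; exact e
  have hu := coeff_unique h e2
  constructor
  · have := congrFun hu s; simpa using this
  · have := congrFun hu t; simpa [Ne.symm hst, hst] using this

lemma span_pair_coords (h : SimpleRootSystem α r) {s t : ι} (hst : s ≠ t) {v : V}
    (hv : v ∈ Submodule.span ℝ (α '' ({s, t} : Set ι))) :
    ∃ x y : ℝ, v = x • α s + y • α t := by
  classical
  obtain ⟨c, hsupp, rfl⟩ := mem_span_iff.mp hv
  refine ⟨c s, c t, ?_⟩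
  rw [← Finset.sum_subset (Finset.subset_univ ({s, t} : Finset ι))]
  · rw [Finset.sum_pair hst]
  · intro i _ hi
    simp only [Finset.mem_insert, Finset.mem_singleton] at hi
    push_neg at hi
    rw [hsupp i (by simp [hi.1, hi.2]), zero_smul]

/-! ### Rank two: the Cartan determinant is nonzero -/

lemma cartan_pair_ne_four (h : SimpleRootSystem α r) {s t : ι} (hst : s ≠ t) :
    cf h s (α t) * cf h t (α s) ≠ 4 := by
  intro hab
  set a := cf h s (α t) with ha
  set b := cf h t (α s) with hb
  set M : V ≃ₗ[ℝ] V := r t * r s with hM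
  set ν : V := (-2 : ℝ) • α s + b • α t with hν
  have hMs' : M (α s) = -α s + b • α t := by
    rw [hM, mul_apply, h.refl_self s, map_neg, cf_spec h t (α s), ← hb]
    module
  have hMs : M (α s) = α s + ν := by
    rw [hMs', hν]; module
  have hMt : M (α t) = -a • α s + (a * b - 1) • α t := by
    rw [hM, mul_apply, cf_spec h s (α t), ← ha, map_sub, map_smul,
      cf_spec h t (α t), cf_alpha_self h t, cf_spec h t (α s), ← hb]
    module
  have hMν : M ν = ν := by
    have e1 : M ν = (2 - a * b) • α s + (b * (a * b - 1) - 2 * b) • α t := by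
      rw [hν, map_add, map_smul, map_smul, hMs', hMt]
      module
    have c1 : 2 - a * b = (-2 : ℝ) := by rw [hab]; norm_num
    have c2 : b * (a * b - 1) - 2 * b = b := by rw [hab]; ring
    rw [e1, c1, c2, hν]
  have hpow : ∀ k : ℕ, (M ^ k) (α s) = α s + (k : ℝ) • ν ∧ (M ^ k) ν = ν := by
    intro k
    induction k with
    | zero => constructor <;> simp [one_apply]
    | succ n ih =>
      obtain ⟨ih1, ih2⟩ := ih
      have e : M ^ (n + 1) = M ^ n * M := pow_succ M n
      constructor
      · rw [e, mul_apply, hMs, map_add, ih1, ih2]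
        push_cast
        module
      · rw [e, mul_apply, hMν, ih2]
  have hν0 : ν ≠ 0 := by
    intro h0
    have : (-2 : ℝ) • α s + b • α t = (0:ℝ) • α s + (0:ℝ) • α t := by
      rw [← hν, h0]; simp
    have := (pair_coeff_unique h hst this).1
    norm_num at this
  have hMmem : ∀ k : ℕ, (M ^ k) ∈ WoJ r Set.univ := fun k =>
    pow_mem (mul_mem (r_mem_WoJ (Set.mem_univ t)) (r_mem_WoJ (Set.mem_univ s))) k
  have hroot : ∀ k : ℕ, α s + (k : ℝ) • ν ∈ DeloJ α r Set.univ := by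
    intro k
    rw [← (hpow k).1]
    exact smul_DeloJ (hMmem k) (alpha_mem_DeloJ (Set.mem_univ s))
  have hinj : Function.Injective (fun k : ℕ => α s + (k : ℝ) • ν) := by
    intro k k' e
    simp only [add_right_inj] at e
    have := smul_left_injective ℝ hν0 e
    exact_mod_cast this
  exact (h.finite.not_infinite) (Set.infinite_of_injective_forall_mem hinj hroot)


/-! ### Rank two: an element fixing both simple roots is the identity -/

lemma word_fixes (h : SimpleRootSystem α r) {J : Set ι} (l : List ι)
    (hl : ∀ i ∈ l, i ∈ J) {v : V} (hv : ∀ i ∈ J, cf h i v = 0) :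
    (l.map r).prod v = v := by
  induction l with
  | nil => simp [one_apply]
  | cons a u ihu =>
    have e : ((a :: u).map r).prod v = r a (((u.map r).prod) v) := by
      rw [List.map_cons, List.prod_cons, mul_apply]
    rw [e, ihu (fun i hi => hl i (List.mem_cons_of_mem a hi)), cf_spec h a v,
      hv a (hl a (List.mem_cons_self)), zero_smul, sub_zero]

lemma fix_of_fix_pair (h : SimpleRootSystem α r) {s t : ι} (hst : s ≠ t)
    {d : V ≃ₗ[ℝ] V} (hd : d ∈ WoJ r ({s, t} : Set ι))
    (hs : d (α s) = α s) (ht : d (α t) = α t) : d = 1 := by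
  set a := cf h s (α t) with ha
  set b := cf h t (α s) with hb
  have hD : 4 - a * b ≠ 0 := fun hc => cartan_pair_ne_four h hst (by linarith)
  obtain ⟨l, hl, rfl⟩ := (mem_WoJ_iff h).mp hd
  refine LinearEquiv.toLinearMap_injective (LinearMap.ext (fun v => ?_))
  show (l.map r).prod v = (1 : V ≃ₗ[ℝ] V) v
  rw [one_apply]
  set A := cf h s v with hA
  set B := cf h t v with hB
  set x := (2 * A - a * B) / (4 - a * b) with hx
  set y := (2 * B - b * A) / (4 - a * b) with hy
  set u := v - x • α s - y • α t with hu
  have hcfs : cf h s u = 0 := by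
    rw [hu, cf_sub h, cf_sub h, cf_smul h, cf_smul h, cf_alpha_self h, ← ha, ← hA, hx, hy]
    field_simp
    ring
  have hcft : cf h t u = 0 := by
    rw [hu, cf_sub h, cf_sub h, cf_smul h, cf_smul h, cf_alpha_self h, ← hb, ← hB, hx, hy]
    field_simp
    ring
  have hufix : (l.map r).prod u = u := by
    refine word_fixes h l hl ?_
    intro i hi
    rcases hi with hi | hi
    · subst hi; exact hcfs
    · rw [Set.mem_singleton_iff.mp hi]; exact hcft
  have hv : v = x • α s + y • α t + u := by rw [hu]; abel
  rw [hv, map_add, map_add, map_smul, map_smul, hufix, hs, ht]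

/-! ### Rank two: a sign invariant -/

noncomputable def psi (h : SimpleRootSystem α r) (s t : ι) (g : V ≃ₗ[ℝ] V) : ℝ :=
  cf h s (g (α s)) * cf h t (g (α t)) - cf h t (g (α s)) * cf h s (g (α t))

lemma psi_one (h : SimpleRootSystem α r) (s t : ι) :
    psi h s t 1 = 4 - cf h s (α t) * cf h t (α s) := by
  rw [psi, one_apply, one_apply, cf_alpha_self h, cf_alpha_self h]
  ring

lemma psi_mul_r (h : SimpleRootSystem α r) (s t : ι) (g : V ≃ₗ[ℝ] V) {u : ι}
    (hu : u ∈ ({s, t} : Set ι)) : psi h s t (g * r u) = - psi h s t g := by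
  rcases hu with hu | hu
  · subst hu
    have e1 : (g * r u) (α u) = -(g (α u)) := by
      rw [mul_apply, h.refl_self, map_neg]
    have e2 : (g * r u) (α t) = g (α t) - cf h u (α t) • (g (α u)) := by
      rw [mul_apply, cf_spec h u (α t), map_sub, map_smul]
    rw [psi, psi, e1, e2, cf_neg h, cf_neg h, cf_sub h, cf_sub h, cf_smul h, cf_smul h]
    ring
  · rw [Set.mem_singleton_iff.mp hu]
    have e1 : (g * r t) (α t) = -(g (α t)) := by
      rw [mul_apply, h.refl_self, map_neg]
    have e2 : (g * r t) (α s) = g (α s) - cf h t (α s) • (g (α t)) := by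
      rw [mul_apply, cf_spec h t (α s), map_sub, map_smul]
    rw [psi, psi, e1, e2, cf_neg h, cf_neg h, cf_sub h, cf_sub h, cf_smul h, cf_smul h]
    ring

lemma psi_word (h : SimpleRootSystem α r) (s t : ι) (l : List ι)
    (hl : ∀ i ∈ l, i ∈ ({s, t} : Set ι)) :
    psi h s t ((l.map r).prod) = (-1 : ℝ) ^ l.length * (4 - cf h s (α t) * cf h t (α s)) := by
  induction l using List.reverseRecOn with
  | nil => simp [psi_one h s t]
  | append_singleton l a ih =>
    have hl' : ∀ i ∈ l, i ∈ ({s, t} : Set ι) := fun i hi => hl i (List.mem_append_left _ hi)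
    have ha : a ∈ ({s, t} : Set ι) := hl a (List.mem_append_right _ (List.mem_singleton_self a))
    have hprod : ((l ++ [a]).map r).prod = (l.map r).prod * r a := by
      rw [List.map_append, List.prod_append]; simp
    rw [hprod, psi_mul_r h s t _ ha, ih hl', List.length_append, List.length_singleton]
    ring

/-! ### Rank two: no nontrivial element preserves positivity -/

lemma rank2_eq_one (h : SimpleRootSystem α r) {s t : ι} (hst : s ≠ t)
    {d : V ≃ₗ[ℝ] V} (hd : d ∈ WoJ r ({s, t} : Set ι))
    (hall : ∀ v ∈ DeloJ α r ({s, t} : Set ι), FPosComb α v → FPosComb α (d v)) :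
    d = 1 := by
  classical
  have hαinj : Function.Injective α := h.indep.injective
  obtain ⟨ks, hks, hdks⟩ := perm_simple h hd hall (show s ∈ ({s,t} : Set ι) by simp)
  obtain ⟨kt, hkt, hdkt⟩ := perm_simple h hd hall (show t ∈ ({s,t} : Set ι) by simp)
  have hne : ks ≠ kt := by
    intro e
    apply hst
    apply hαinj
    apply d.injective
    rw [hdks, hdkt, e]
  have hNempty : NSet α r ({s,t} : Set ι) d = ∅ := by
    ext v
    simp only [NSet, Set.mem_setOf_eq, Set.mem_empty_iff_false, iff_false, not_and]
    exact fun hv hp hn => hn (hall v hv hp)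
  have hswap_absurd : ¬ (d (α s) = α t ∧ d (α t) = α s) := by
    rintro ⟨es, et⟩
    obtain ⟨l, hl, hprod⟩ := (mem_WoJ_iff h).mp hd
    have hcard := (NSet_word_bound h l hl).2
    rw [hprod, hNempty] at hcard
    simp only [Set.ncard_empty] at hcard
    have heven : Even l.length := Nat.even_iff.mpr hcard.symm
    have hψ := psi_word h s t l hl
    rw [hprod, heven.neg_one_pow, one_mul] at hψ
    have hψ2 : psi h s t d = cf h s (α t) * cf h t (α s) - 4 := by
      rw [psi, es, et, cf_alpha_self h, cf_alpha_self h]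
      ring
    rw [hψ2] at hψ
    exact cartan_pair_ne_four h hst (by linarith)
  rcases hks with hks | hks <;> rcases hkt with hkt | hkt
  · exact absurd (by rw [hks, Set.mem_singleton_iff.mp hkt] :  ks = kt) hne
  · exact fix_of_fix_pair h hst hd (by rwa [hks] at hdks)
      (by rwa [Set.mem_singleton_iff.mp hkt] at hdkt)
  · exact absurd ⟨by rwa [Set.mem_singleton_iff.mp hks] at hdks,
      by rwa [hkt] at hdkt⟩ hswap_absurd
  · exact absurd (by rw [Set.mem_singleton_iff.mp hks, Set.mem_singleton_iff.mp hkt] :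
      ks = kt) hne


/-! ### Rank two: length equals the number of inversions -/

lemma lenJ_one (r : ι → V ≃ₗ[ℝ] V) (J : Set ι) : lenJ r J 1 = 0 := by
  unfold lenJ
  rw [Nat.sInf_eq_zero]
  exact Or.inl ⟨[], by simp, rfl, by simp⟩

lemma rank2_len_eq_ncard (h : SimpleRootSystem α r) {s t : ι} (hst : s ≠ t) :
    ∀ n : ℕ, ∀ d ∈ WoJ r ({s, t} : Set ι), (NSet α r ({s, t} : Set ι) d).ncard = n →
      lenJ r ({s, t} : Set ι) d = n := by
  intro n
  induction n using Nat.strong_induction_on with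
  | _ n ih =>
    intro d hd hcard
    rcases Nat.eq_zero_or_pos n with hn | hn
    · subst hn
      have hN : NSet α r ({s, t} : Set ι) d = ∅ :=
        (Set.ncard_eq_zero (NSet_finite h _ d)).mp hcard
      have hall : ∀ v ∈ DeloJ α r ({s, t} : Set ι), FPosComb α v → FPosComb α (d v) := by
        intro v hv hp
        by_contra hc
        have hmm : v ∈ NSet α r ({s, t} : Set ι) d := ⟨hv, hp, hc⟩
        rw [hN] at hmm
        exact hmm
      rw [rank2_eq_one h hst hd hall, lenJ_one]
    · have hNne : (NSet α r ({s, t} : Set ι) d).Nonempty := by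
        apply Set.nonempty_of_ncard_ne_zero
        omega
      obtain ⟨v, hv, hp, hneg⟩ := hNne
      obtain ⟨j, hj, hdj⟩ := descent_exists h hv hp hneg
      have hdu : d ∈ WoJ r Set.univ := WoJ_mono (Set.subset_univ _) hd
      have hpred := NSet_ncard_pred h hj hdu hdj
      rw [hcard] at hpred
      have hd' : d * r j ∈ WoJ r ({s, t} : Set ι) := mul_mem hd (r_mem_WoJ hj)
      have ihj := ih (n - 1) (by omega) (d * r j) hd' (by omega)
      have hle : lenJ r ({s, t} : Set ι) d ≤ n := by
        have := lenJ_mul_r_le h hj hd'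
        rw [mul_r_r h] at this
        omega
      have hge := (NSet_ncard_le_lenJ h hd).1
      omega

lemma rank2_pos_of_len_incr (h : SimpleRootSystem α r) {s t : ι} (hst : s ≠ t)
    {d : V ≃ₗ[ℝ] V} (hd : d ∈ WoJ r ({s, t} : Set ι)) {u : ι} (hu : u ∈ ({s, t} : Set ι))
    (hlen : lenJ r ({s, t} : Set ι) d < lenJ r ({s, t} : Set ι) (d * r u)) :
    FPosComb α (d (α u)) := by
  by_contra hc
  have hdu : d ∈ WoJ r Set.univ := WoJ_mono (Set.subset_univ _) hd
  have hpred := NSet_ncard_pred h hu hdu hc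
  have e1 := rank2_len_eq_ncard h hst _ d hd rfl
  have e2 := rank2_len_eq_ncard h hst _ (d * r u) (mul_mem hd (r_mem_WoJ hu)) rfl
  omega

lemma pos_pair_coords (h : SimpleRootSystem α r) {s t : ι} (hst : s ≠ t) {v : V}
    (hv : v ∈ DeloJ α r ({s, t} : Set ι)) (hp : FPosComb α v) :
    ∃ x y : ℝ, 0 ≤ x ∧ 0 ≤ y ∧ v = x • α s + y • α t := by
  classical
  obtain ⟨c, hc, hsupp, rfl⟩ := root_support h hv hp
  refine ⟨c s, c t, hc s, hc t, ?_⟩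
  rw [← Finset.sum_subset (Finset.subset_univ ({s, t} : Finset ι))]
  · rw [Finset.sum_pair hst]
  · intro i _ hi
    simp only [Finset.mem_insert, Finset.mem_singleton] at hi
    push_neg at hi
    rw [hsupp i (by simp [hi.1, hi.2]), zero_smul]

/-! ### The descent chain into a rank-two parabolic -/

lemma descent_chain (h : SimpleRootSystem α r) {J : Set ι} {j k : ι} (hj : j ∈ J)
    (hk : k ∈ J) :
    ∀ n : ℕ, ∀ w ∈ WoJ r J, lenJ r J w = n →
      ∃ (v : V ≃ₗ[ℝ] V) (dl : List ι), v ∈ WoJ r J ∧ (∀ i ∈ dl, i ∈ ({j, k} : Set ι)) ∧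
        w = v * (dl.map r).prod ∧ lenJ r J w = lenJ r J v + dl.length ∧
        lenJ r J v < lenJ r J (v * r j) ∧ lenJ r J v < lenJ r J (v * r k) := by
  intro n
  induction n using Nat.strong_induction_on with
  | _ n ih =>
    intro w hw hn
    by_cases hterm : lenJ r J w < lenJ r J (w * r j) ∧ lenJ r J w < lenJ r J (w * r k)
    · exact ⟨w, [], hw, by simp, by simp, by simp, hterm.1, hterm.2⟩
    · have hstep : ∃ u, u ∈ ({j, k} : Set ι) ∧ lenJ r J (w * r u) + 1 = lenJ r J w := by
        rcases not_and_or.mp hterm with hc | hc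
        · rcases lenJ_mul_r_dichotomy h hj hw with hd | hd
          · omega
          · exact ⟨j, by simp, hd.symm⟩
        · rcases lenJ_mul_r_dichotomy h hk hw with hd | hd
          · omega
          · exact ⟨k, by simp, hd.symm⟩
      obtain ⟨u, hu, hlen⟩ := hstep
      have huJ : u ∈ J := by
        rcases hu with hu | hu
        · exact hu ▸ hj
        · exact (Set.mem_singleton_iff.mp hu) ▸ hk
      have hw' : w * r u ∈ WoJ r J := mul_mem hw (r_mem_WoJ huJ)
      obtain ⟨v, dl, hv, hdl, heq, hlen2, hj2, hk2⟩ :=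
        ih (lenJ r J (w * r u)) (by omega) (w * r u) hw' rfl
      refine ⟨v, dl ++ [u], hv, ?_, ?_, ?_, hj2, hk2⟩
      · intro i hi
        rcases List.mem_append.mp hi with hi | hi
        · exact hdl i hi
        · rw [List.mem_singleton.mp hi]; exact hu
      · rw [List.map_append, List.prod_append, ← mul_assoc, ← heq]
        simp only [List.map_cons, List.map_nil, List.prod_cons, List.prod_nil, mul_one]
        exact (mul_r_r h w u).symm
      · rw [List.length_append, List.length_singleton]
        omega

/-! ### The key lemma -/

lemma pos_of_len_incr (h : SimpleRootSystem α r) :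
    ∀ n : ℕ, ∀ (J : Set ι) (w : V ≃ₗ[ℝ] V), w ∈ WoJ r J → ∀ j ∈ J, lenJ r J w = n →
      lenJ r J w < lenJ r J (w * r j) → FPosComb α (w (α j)) := by
  intro n
  induction n using Nat.strong_induction_on with
  | _ n ih =>
    intro J w hw j hj hn hincr
    rcases Nat.eq_zero_or_pos n with h0 | h0
    · rw [eq_one_of_lenJ_zero h hw (h0 ▸ hn), one_apply]
      exact Pos_alpha j
    · obtain ⟨l, hl, hlen, hprod⟩ := lenJ_exists h hw
      have hlne : l ≠ [] := by
        intro hc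
        rw [hc] at hlen
        simp at hlen
        omega
      rcases List.eq_nil_or_concat l with hc | ⟨l', k, rfl⟩
      · exact absurd hc hlne
      rw [List.concat_eq_append] at *
      have hkJ : k ∈ J := hl k (List.mem_append_right _ (List.mem_singleton_self k))
      have hwk : w * r k = (l'.map r).prod := by
        rw [← hprod, List.map_append, List.prod_append]
        simp [mul_assoc, h.invol k]
      have hlk : lenJ r J (w * r k) < lenJ r J w := by
        have := lenJ_le r l' (fun i hi => hl i (List.mem_append_left _ hi))
        rw [← hwk] at this
        rw [List.length_append, List.length_singleton] at hlen
        omega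
      have hkj : k ≠ j := by
        intro hc
        subst hc
        omega
      obtain ⟨v, dl, hv, hdl, heq, hlen2, hvj, hvk⟩ := descent_chain h hj hkJ n w hw hn
      set d : V ≃ₗ[ℝ] V := (dl.map r).prod with hd_def
      have hd : d ∈ WoJ r ({j, k} : Set ι) := (mem_WoJ_iff h).mpr ⟨dl, hdl, rfl⟩
      by_cases hdl0 : dl = []
      · exfalso
        have hd1 : d = 1 := by rw [hd_def, hdl0, List.map_nil, List.prod_nil]
        have hwv : w = v := by rw [heq, hd1, mul_one]
        rw [hwv] at hlk
        omega
      have hm1 : 1 ≤ dl.length := by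
        rcases Nat.eq_zero_or_pos dl.length with h0' | h0'
        · exact absurd (List.length_eq_zero_iff.mp h0') hdl0
        · exact h0'
      have hvlen : lenJ r J v < n := by omega
      have hPj : FPosComb α (v (α j)) := ih (lenJ r J v) (by omega) J v hv j hj rfl hvj
      have hPk : FPosComb α (v (α k)) := ih (lenJ r J v) (by omega) J v hv k hkJ rfl hvk
      have hjk : j ≠ k := fun e => hkj e.symm
      have hjmem : j ∈ ({j, k} : Set ι) := by simp
      have hPlen : lenJ r ({j, k} : Set ι) d < lenJ r ({j, k} : Set ι) (d * r j) := by
        by_contra hcon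
        rcases lenJ_mul_r_dichotomy h hjmem hd with hdi | hdi
        · omega
        · obtain ⟨e, he1, he2, he3⟩ := lenJ_exists h (mul_mem hd (r_mem_WoJ hjmem))
          obtain ⟨lv, hlv1, hlv2, hlv3⟩ := lenJ_exists h hv
          have hword : ((lv ++ e).map r).prod = w * r j := by
            rw [List.map_append, List.prod_append, hlv3, he3, heq, mul_assoc]
          have hletters : ∀ i ∈ lv ++ e, i ∈ J := by
            intro i hi
            rcases List.mem_append.mp hi with hi | hi
            · exact hlv1 i hi
            · rcases he1 i hi with hii | hii
              · exact hii ▸ hj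
              · exact (Set.mem_singleton_iff.mp hii) ▸ hkJ
          have hle := lenJ_le r (lv ++ e) hletters
          rw [hword, List.length_append] at hle
          have hdlen : lenJ r ({j, k} : Set ι) d ≤ dl.length := lenJ_le r dl hdl
          omega
      have hPosd : FPosComb α (d (α j)) :=
        rank2_pos_of_len_incr h hjk hd hjmem hPlen
      have hdroot : d (α j) ∈ DeloJ α r ({j, k} : Set ι) :=
        smul_DeloJ hd (alpha_mem_DeloJ hjmem)
      obtain ⟨x, y, hx, hy, hxy⟩ := pos_pair_coords h hjk hdroot hPosd
      have : w (α j) = x • (v (α j)) + y • (v (α k)) := by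
        rw [heq, mul_apply, hxy, map_add, map_smul, map_smul]
      rw [this]
      exact Pos_add (Pos_smul hx hPj) (Pos_smul hy hPk)


/-! ### An element preserving all positive roots is the identity -/

lemma eq_one_of_all_pos (h : SimpleRootSystem α r) {J : Set ι} {w : V ≃ₗ[ℝ] V}
    (hw : w ∈ WoJ r J)
    (hall : ∀ v ∈ DeloJ α r J, FPosComb α v → FPosComb α (w v)) : w = 1 := by
  rcases Nat.eq_zero_or_pos (lenJ r J w) with h0 | h0
  · exact eq_one_of_lenJ_zero h hw h0
  · exfalso
    obtain ⟨l, hl, hlen, hprod⟩ := lenJ_exists h hw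
    rcases List.eq_nil_or_concat l with hc | ⟨l', k, rfl⟩
    · rw [hc] at hlen; simp at hlen; omega
    rw [List.concat_eq_append] at *
    have hkJ : k ∈ J := hl k (List.mem_append_right _ (List.mem_singleton_self k))
    have hwk : w * r k = (l'.map r).prod := by
      rw [← hprod, List.map_append, List.prod_append]
      simp [mul_assoc, h.invol k]
    have hlk : lenJ r J (w * r k) < lenJ r J w := by
      have := lenJ_le r l' (fun i hi => hl i (List.mem_append_left _ hi))
      rw [← hwk] at this
      rw [List.length_append, List.length_singleton] at hlen
      omega
    have hw' : w * r k ∈ WoJ r J := mul_mem hw (r_mem_WoJ hkJ)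
    have hincr : lenJ r J (w * r k) < lenJ r J ((w * r k) * r k) := by
      rw [mul_r_r h]; exact hlk
    have hPos := pos_of_len_incr h (lenJ r J (w * r k)) J (w * r k) hw' k hkJ rfl hincr
    have happ : (w * r k) (α k) = -(w (α k)) := by
      rw [mul_apply, h.refl_self, map_neg]
    rw [happ] at hPos
    have hP2 : FPosComb α (w (α k)) := hall _ (alpha_mem_DeloJ hkJ) (Pos_alpha k)
    have hroot : w (α k) ∈ DeloJ α r Set.univ :=
      smul_DeloJ (WoJ_mono (Set.subset_univ J) hw) (alpha_mem_DeloJ (Set.mem_univ k))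
    exact not_Pos_both h hroot hP2 hPos

/-! ### Main forward lemma -/

lemma mem_WoK_of_pos (h : SimpleRootSystem α r) {J K : Set ι} (hK : K ⊆ J) :
    ∀ n : ℕ, ∀ w ∈ WoJ r J, (NSet α r J w).ncard = n →
      (∀ v ∈ DeloJ α r J, FPosComb α v → v ∉ DeloJ α r K → FPosComb α (w v)) →
      w ∈ WoJ r K := by
  intro n
  induction n using Nat.strong_induction_on with
  | _ n ih =>
    intro w hw hcard hyp
    rcases Nat.eq_zero_or_pos n with h0 | h0
    · subst h0
      have hN : NSet α r J w = ∅ := (Set.ncard_eq_zero (NSet_finite h J w)).mp hcard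
      have hall : ∀ v ∈ DeloJ α r J, FPosComb α v → FPosComb α (w v) := by
        intro v hv hp
        by_contra hc
        have hmm : v ∈ NSet α r J w := ⟨hv, hp, hc⟩
        rw [hN] at hmm
        exact hmm
      rw [eq_one_of_all_pos h hw hall]
      exact one_mem _
    · have hNne : (NSet α r J w).Nonempty := Set.nonempty_of_ncard_ne_zero (by omega)
      obtain ⟨v₀, hv₀, hp₀, hn₀⟩ := hNne
      obtain ⟨j, hj, hdj⟩ := descent_exists h hv₀ hp₀ hn₀
      have hajK : α j ∈ DeloJ α r K := by
        by_contra hc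
        exact hdj (hyp _ (alpha_mem_DeloJ hj) (Pos_alpha j) hc)
      have hjK : j ∈ K := j_mem_of_alpha_mem_DeloJ h hajK
      have hwu : w ∈ WoJ r Set.univ := WoJ_mono (Set.subset_univ J) hw
      have hpred := NSet_ncard_pred h hj hwu hdj
      have hw' : w * r j ∈ WoJ r J := mul_mem hw (r_mem_WoJ hj)
      have hyp' : ∀ v ∈ DeloJ α r J, FPosComb α v → v ∉ DeloJ α r K →
          FPosComb α ((w * r j) v) := by
        intro v hv hp hnK
        have hvne : v ≠ α j := fun e => hnK (e ▸ hajK)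
        have hu1 : r j v ∈ DeloJ α r J := smul_DeloJ (r_mem_WoJ hj) hv
        have hu2 : FPosComb α (r j v) := refl_pos h (mem_DeloJ_univ h hv) hp hvne
        have hu3 : r j v ∉ DeloJ α r K := by
          intro hc
          apply hnK
          have := smul_DeloJ (r_mem_WoJ hjK) hc
          rwa [r_r_apply h] at this
        have := hyp _ hu1 hu2 hu3
        rwa [mul_apply]
      have hmem' : w * r j ∈ WoJ r K := ih (n - 1) (by omega) (w * r j) hw' (by omega) hyp'
      have : (w * r j) * r j = w := mul_r_r h w j
      rw [← this]
      exact mul_mem hmem' (r_mem_WoJ hjK)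

/-! ### Backward stability -/

lemma word_stable (h : SimpleRootSystem α r) {K : Set ι} (l : List ι)
    (hl : ∀ i ∈ l, i ∈ K) {v : V} (hv : v ∈ DeloJ α r Set.univ)
    (hp : FPosComb α v) (hnK : v ∉ DeloJ α r K) :
    FPosComb α ((l.map r).prod v) ∧ (l.map r).prod v ∉ DeloJ α r K ∧
      (l.map r).prod v ∈ DeloJ α r Set.univ := by
  induction l with
  | nil => exact ⟨by simpa [one_apply] using hp, by simpa [one_apply] using hnK,
      by simpa [one_apply] using hv⟩
  | cons a u ihu =>
    have haK : a ∈ K := hl a (List.mem_cons_self)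
    obtain ⟨ih1, ih2, ih3⟩ := ihu (fun i hi => hl i (List.mem_cons_of_mem a hi))
    set z := (u.map r).prod v with hz
    have e : ((a :: u).map r).prod v = r a z := by
      rw [List.map_cons, List.prod_cons, mul_apply]
    have hzne : z ≠ α a := fun hc => ih2 (hc ▸ alpha_mem_DeloJ haK)
    refine ⟨?_, ?_, ?_⟩
    · rw [e]; exact refl_pos h ih3 ih1 hzne
    · rw [e]
      intro hc
      apply ih2
      have := smul_DeloJ (r_mem_WoJ haK) hc
      rwa [r_r_apply h] at this
    · rw [e]; exact smul_DeloJ (r_mem_WoJ (Set.mem_univ a)) ih3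

end SRS

/-- Lemma 4.1(4): for `K₁, K₂ ⊆ J` and `w₁, w₂ ∈ ∘W_J`,
`w₁∘Δ^{K₁}_{J+} ⊆ w₂∘Δ^{K₂}_{J+}` iff `K₁ ⊇ K₂` and `w₁ ∈ w₂∘W_{K₁}`,
and likewise with `−` in place of `+`. -/

theorem statement7 (α : ι → V) (r : ι → V ≃ₗ[ℝ] V) (h : SimpleRootSystem α r)
    (J K₁ K₂ : Set ι) (hK₁ : K₁ ⊆ J) (hK₂ : K₂ ⊆ J)
    (w₁ w₂ : V ≃ₗ[ℝ] V) (hw₁ : w₁ ∈ WoJ r J) (hw₂ : w₂ ∈ WoJ r J) :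
    ((⇑w₁ '' DeloKJpos α r J K₁ ⊆ ⇑w₂ '' DeloKJpos α r J K₂) ↔
        (K₂ ⊆ K₁ ∧ w₂⁻¹ * w₁ ∈ WoJ r K₁)) ∧
      ((⇑w₁ '' DeloKJneg α r J K₁ ⊆ ⇑w₂ '' DeloKJneg α r J K₂) ↔
        (K₂ ⊆ K₁ ∧ w₂⁻¹ * w₁ ∈ WoJ r K₁)) := by
  classical
  open SRS in
  set w : V ≃ₗ[ℝ] V := w₂⁻¹ * w₁ with hwdef
  have hwJ : w ∈ WoJ r J := mul_mem (inv_mem hw₂) hw₁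
  have himg : ∀ S T : Set V, (⇑w₁ '' S ⊆ ⇑w₂ '' T) ↔ ∀ v ∈ S, w v ∈ T := by
    intro S T
    constructor
    · intro hsub v hv
      obtain ⟨u, hu, he⟩ := hsub ⟨v, hv, rfl⟩
      have he2 : w v = u := by
        rw [hwdef, SRS.mul_apply, ← he]
        exact SRS.inv_apply_eq rfl
      rw [he2]
      exact hu
    · intro hsub x hx
      obtain ⟨v, hv, rfl⟩ := hx
      refine ⟨w v, hsub v hv, ?_⟩
      rw [hwdef, SRS.mul_apply]
      exact w₂.apply_symm_apply (w₁ v)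
  have posfwd : (∀ v ∈ DeloKJpos α r J K₁, w v ∈ DeloKJpos α r J K₂) →
      (K₂ ⊆ K₁ ∧ w ∈ WoJ r K₁) := by
    intro hinc
    have hwK₁ : w ∈ WoJ r K₁ := by
      refine SRS.mem_WoK_of_pos h hK₁ _ w hwJ rfl ?_
      intro v hv hp hnK
      exact (hinc v ⟨⟨hv, hnK⟩, hp⟩).2
    refine ⟨?_, hwK₁⟩
    intro k hk
    by_contra hk1
    set v := w⁻¹ (α k) with hvdef
    have hakJ : α k ∈ DeloJ α r J := SRS.alpha_mem_DeloJ (hK₂ hk)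
    have hvJ : v ∈ DeloJ α r J := SRS.smul_DeloJ (inv_mem hwJ) hakJ
    have hwv : w v = α k := w.apply_symm_apply (α k)
    have hvnK₁ : v ∉ DeloJ α r K₁ := by
      intro hc
      have h2 := SRS.smul_DeloJ hwK₁ hc
      rw [hwv] at h2
      exact hk1 (SRS.j_mem_of_alpha_mem_DeloJ h h2)
    have hvu : v ∈ DeloJ α r Set.univ := SRS.mem_DeloJ_univ h hvJ
    rcases SRS.Pos_or_neg h hvu with hp | hp
    · have h3 := hinc v ⟨⟨hvJ, hvnK₁⟩, hp⟩
      rw [hwv] at h3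
      exact h3.1.2 (SRS.alpha_mem_DeloJ hk)
    · have hnegJ : -v ∈ DeloJ α r J := SRS.neg_mem_DeloJ h hvJ
      have hnegK : -v ∉ DeloJ α r K₁ := by
        intro hc
        have h4 := SRS.neg_mem_DeloJ h hc
        rw [neg_neg] at h4
        exact hvnK₁ h4
      have h5 := hinc (-v) ⟨⟨hnegJ, hnegK⟩, hp⟩
      have he : w (-v) = -α k := by rw [map_neg, hwv]
      rw [he] at h5
      exact SRS.not_Pos_both h (SRS.alpha_mem_DeloJ (Set.mem_univ k)) (SRS.Pos_alpha k) h5.2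
  have posbwd : K₂ ⊆ K₁ → w ∈ WoJ r K₁ →
      ∀ v ∈ DeloKJpos α r J K₁, w v ∈ DeloKJpos α r J K₂ := by
    intro hK21 hwK₁ v hv
    obtain ⟨⟨hvJ, hvnK₁⟩, hp⟩ := hv
    obtain ⟨l, hl, hprod⟩ := (SRS.mem_WoJ_iff h).mp hwK₁
    obtain ⟨hs1, hs2, _⟩ := SRS.word_stable h l hl (SRS.mem_DeloJ_univ h hvJ) hp hvnK₁
    rw [hprod] at hs1 hs2
    refine ⟨⟨SRS.smul_DeloJ (SRS.WoJ_mono hK₁ hwK₁) hvJ, ?_⟩, hs1⟩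
    intro hc
    exact hs2 (SRS.DeloJ_mono h hK21 hc)
  have pos_iff : (⇑w₁ '' DeloKJpos α r J K₁ ⊆ ⇑w₂ '' DeloKJpos α r J K₂) ↔
      (K₂ ⊆ K₁ ∧ w ∈ WoJ r K₁) := by
    rw [himg]
    exact ⟨posfwd, fun hab => posbwd hab.1 hab.2⟩
  have hneg_eq : ∀ K : Set ι, DeloKJneg α r J K = -(DeloKJpos α r J K) := by
    intro K
    ext v
    simp only [DeloKJneg, DeloKJpos, Set.mem_neg, Set.mem_inter_iff, Set.mem_diff,
      Set.mem_setOf_eq]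
    constructor
    · rintro ⟨⟨h1, h2⟩, h3⟩
      refine ⟨⟨SRS.neg_mem_DeloJ h h1, ?_⟩, h3⟩
      intro hc
      have h4 := SRS.neg_mem_DeloJ h hc
      rw [neg_neg] at h4
      exact h2 h4
    · rintro ⟨⟨h1, h2⟩, h3⟩
      have h4 := SRS.neg_mem_DeloJ h h1
      rw [neg_neg] at h4
      refine ⟨⟨h4, ?_⟩, h3⟩
      intro hc
      exact h2 (SRS.neg_mem_DeloJ h hc)
  have himgneg : ∀ (g : V ≃ₗ[ℝ] V) (S : Set V), ⇑g '' (-S) = -(⇑g '' S) := by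
    intro g S
    ext x
    simp only [Set.mem_image, Set.mem_neg]
    constructor
    · rintro ⟨s, hs, rfl⟩
      exact ⟨-s, hs, by rw [map_neg]⟩
    · rintro ⟨u, hu, he⟩
      refine ⟨-u, by rwa [neg_neg], ?_⟩
      rw [map_neg, he, neg_neg]
  have neg_iff : (⇑w₁ '' DeloKJneg α r J K₁ ⊆ ⇑w₂ '' DeloKJneg α r J K₂) ↔
      (K₂ ⊆ K₁ ∧ w ∈ WoJ r K₁) := by
    rw [hneg_eq K₁, hneg_eq K₂, himgneg, himgneg, Set.neg_subset_neg]
    exact pos_iff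
  exact ⟨pos_iff, neg_iff⟩

end
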